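/- arXiv:2401.10239 — 11 statements merged into one kernel-verified Lean document; each statement's English description precedes it below -/
import Mathlib

section
/- Let Z = LZ(M_z, G_z, c_z, S_z, A_z, b_z) ⊆ ℝ^n and Y = LZ(M_y, G_y, c_y, S_y, A_y, b_y) ⊆ ℝ^m be line zonotopes and R ∈ ℝ^{m×n}. Then the generalized intersection Z ∩_R Y = {z ∈ Z : Rz ∈ Y} equals the line zonotope with lines [M_z 0], generators [G_z 0], center c_z, and constraint matrices S = [blkdiag(S_z, S_y); (R M_z, −M_y)], A = [blkdiag(A_z, A_y); (R G_z, −G_y)], b = [b_z; b_y; c_y − R c_z], where the last constraint row blocks multiply the (δ_z, δ_y) and (ξ_z, ξ_y) variables respectively. -/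
open Matrix

/-- The line zonotope `LZ(M,G,c,S,A,b) = {c + Mδ + Gξ : δ ∈ ℝ^{n_δ}, ‖ξ‖_∞ ≤ 1, Sδ + Aξ = b}`. -/
def LZ {n nδ ng nc : Type*} [Fintype nδ] [Fintype ng]
    (M : Matrix n nδ ℝ) (G : Matrix n ng ℝ) (c : n → ℝ)
    (S : Matrix nc nδ ℝ) (A : Matrix nc ng ℝ) (b : nc → ℝ) : Set (n → ℝ) :=
  {x | ∃ (δ : nδ → ℝ) (ξ : ng → ℝ),
    (∀ i, |ξ i| ≤ 1) ∧ S *ᵥ δ + A *ᵥ ξ = b ∧ x = c + M *ᵥ δ + G *ᵥ ξ}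

/-- Generalized intersection of line zonotopes: `Z ∩_R Y = {z ∈ Z : Rz ∈ Y}` is the line
zonotope with lines `[M_z 0]`, generators `[G_z 0]`, center `c_z`, and constraints
`S = [blkdiag(S_z,S_y); (R M_z, −M_y)]`, `A = [blkdiag(A_z,A_y); (R G_z, −G_y)]`,
`b = [b_z; b_y; c_y − R c_z]`. -/
theorem lz_generalized_intersection {n m dz gz ncz dy gy ncy : Type*}
    [Fintype n] [Fintype dz] [Fintype gz] [Fintype dy] [Fintype gy]
    (Mz : Matrix n dz ℝ) (Gz : Matrix n gz ℝ) (cz : n → ℝ)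
    (Sz : Matrix ncz dz ℝ) (Az : Matrix ncz gz ℝ) (bz : ncz → ℝ)
    (My : Matrix m dy ℝ) (Gy : Matrix m gy ℝ) (cy : m → ℝ)
    (Sy : Matrix ncy dy ℝ) (Ay : Matrix ncy gy ℝ) (bY : ncy → ℝ)
    (R : Matrix m n ℝ) :
    {z ∈ LZ Mz Gz cz Sz Az bz | R *ᵥ z ∈ LZ My Gy cy Sy Ay bY} =
      LZ (fromCols Mz (0 : Matrix n dy ℝ)) (fromCols Gz (0 : Matrix n gy ℝ)) cz
        (fromRows (fromBlocks Sz 0 0 Sy) (fromCols (R * Mz) (-My)))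
        (fromRows (fromBlocks Az 0 0 Ay) (fromCols (R * Gz) (-Gy)))
        (Sum.elim (Sum.elim bz bY) (cy - R *ᵥ cz)) := by
  ext x
  simp only [Set.mem_setOf_eq, LZ]
  constructor
  · rintro ⟨⟨δz, ξz, hξz, hcz, hxz⟩, δy, ξy, hξy, hcy, hxy⟩
    refine ⟨Sum.elim δz δy, Sum.elim ξz ξy, ?_, ?_, ?_⟩
    · rintro (i | i)
      exacts [hξz i, hξy i]
    · have hR : R *ᵥ cz + ((R * Mz) *ᵥ δz + (R * Gz) *ᵥ ξz) = cy + My *ᵥ δy + Gy *ᵥ ξy := by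
        rw [← mulVec_mulVec, ← mulVec_mulVec, ← mulVec_add, ← mulVec_add, ← add_assoc, ← hxz, hxy]
      funext i
      rcases i with (i | i) | i
      · have := congrFun hcz i
        simp [fromRows_mulVec, fromBlocks_mulVec, mulVec_add] at *
        linarith
      · have := congrFun hcy i
        simp [fromRows_mulVec, fromBlocks_mulVec, mulVec_add] at *
        linarith
      · have := congrFun hR i
        simp [fromRows_mulVec, fromBlocks_mulVec, neg_mulVec, mulVec_add] at *
        linarith
    · simp [fromCols_mulVec_sumElim, hxz]
  · rintro ⟨δ, ξ, hξ, hc, hx⟩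
    obtain ⟨δz, δy, rfl⟩ : ∃ a b, δ = Sum.elim a b := ⟨_, _, (Sum.elim_comp_inl_inr δ).symm⟩
    obtain ⟨ξz, ξy, rfl⟩ : ∃ a b, ξ = Sum.elim a b := ⟨_, _, (Sum.elim_comp_inl_inr ξ).symm⟩
    have hcz : Sz *ᵥ δz + Az *ᵥ ξz = bz := by
      funext i
      have := congrFun hc (Sum.inl (Sum.inl i))
      simpa [fromRows_mulVec, fromBlocks_mulVec] using this
    have hcy : Sy *ᵥ δy + Ay *ᵥ ξy = bY := by
      funext i
      have := congrFun hc (Sum.inl (Sum.inr i))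
      simpa [fromRows_mulVec, fromBlocks_mulVec] using this
    have hbot : (R * Mz) *ᵥ δz + -(My *ᵥ δy) + ((R * Gz) *ᵥ ξz + -(Gy *ᵥ ξy))
        = cy - R *ᵥ cz := by
      funext i
      have := congrFun hc (Sum.inr i)
      simpa [fromRows_mulVec, neg_mulVec] using this
    have hx' : x = cz + Mz *ᵥ δz + Gz *ᵥ ξz := by
      simpa [fromCols_mulVec_sumElim] using hx
    refine ⟨⟨δz, ξz, fun i => hξ (Sum.inl i), hcz, hx'⟩, δy, ξy, fun i => hξ (Sum.inr i),
      hcy, ?_⟩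
    have : R *ᵥ x = R *ᵥ cz + ((R * Mz) *ᵥ δz + (R * Gz) *ᵥ ξz) := by
      rw [hx', mulVec_add, mulVec_add, ← mulVec_mulVec, ← mulVec_mulVec, add_assoc]
    funext i
    have h1 := congrFun this i
    have h2 := congrFun hbot i
    simp [mulVec_add] at *
    linarith
end

section
/- Line elimination is exact: let Z = LZ(M, G, c, S, A, b) ⊆ ℝ^n be a line zonotope and suppose S_{i,j} ≠ 0 for some constraint index i and line index j. Write M_{·j} for the j-th column of M, S_{·j} for the j-th column of S, and S_{i,·}, A_{i,·}, b_i for the i-th row of S, the i-th row of A and the i-th entry of b. Then Z equals the line zonotope LZ(M − S_{i,j}^{-1} M_{·j} S_{i,·}, G − S_{i,j}^{-1} M_{·j} A_{i,·}, c + S_{i,j}^{-1} b_i M_{·j}, S − S_{i,j}^{-1} S_{·j} S_{i,·}, A − S_{i,j}^{-1} S_{·j} A_{i,·}, b − S_{i,j}^{-1} b_i S_{·j}), i.e. the set obtained by solving the i-th constraint for δ_j and substituting it into the center expression and the remaining constraints yields exactly the same set (no conservatism is introduced). -/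
open Matrix

lemma sub_outer_mulVec {n m : Type*} [Fintype m]
    (P : Matrix n m ℝ) (a : n → ℝ) (q : m → ℝ) (v : m → ℝ) (k : n) :
    ((Matrix.of fun k l => P k l - a k * q l) *ᵥ v) k
      = (P *ᵥ v) k - a k * (q ⬝ᵥ v) := by
  simp [Matrix.mulVec, dotProduct, sub_mul, mul_assoc,
    Finset.sum_sub_distrib, Finset.mul_sum]

/-- Line elimination is exact: if `S i j ≠ 0`, solving the `i`-th constraint for `δ_j`
and substituting into the center expression and the remaining constraints yields
exactly the same set. -/
theorem lz_line_elimination {n nδ ng nc : Type*}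
    [Fintype nδ] [Fintype ng] [DecidableEq nδ]
    (M : Matrix n nδ ℝ) (G : Matrix n ng ℝ) (c : n → ℝ)
    (S : Matrix nc nδ ℝ) (A : Matrix nc ng ℝ) (b : nc → ℝ)
    (i : nc) (j : nδ) (hij : S i j ≠ 0) :
    LZ M G c S A b =
      LZ (Matrix.of fun k l => M k l - (S i j)⁻¹ * M k j * S i l)
         (Matrix.of fun k l => G k l - (S i j)⁻¹ * M k j * A i l)
         (fun k => c k + (S i j)⁻¹ * b i * M k j)
         (Matrix.of fun r l => S r l - (S i j)⁻¹ * S r j * S i l)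
         (Matrix.of fun r l => A r l - (S i j)⁻¹ * S r j * A i l)
         (fun r => b r - (S i j)⁻¹ * b i * S r j) := by
  ext x
  constructor
  · rintro ⟨δ, ξ, hξ, hc, rfl⟩
    refine ⟨δ, ξ, hξ, ?_, ?_⟩
    · funext r
      have h1 := congrFun hc r
      have h2 := congrFun hc i
      simp only [Pi.add_apply] at h1 h2 ⊢
      rw [sub_outer_mulVec S (fun r => (S i j)⁻¹ * S r j) (S i) δ r,
          sub_outer_mulVec A (fun r => (S i j)⁻¹ * S r j) (A i) ξ r]
      have hs : S i ⬝ᵥ δ = (S *ᵥ δ) i := rfl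
      have ha : A i ⬝ᵥ ξ = (A *ᵥ ξ) i := rfl
      rw [hs, ha]
      linear_combination h1 - (S i j)⁻¹ * S r j * h2
    · funext k
      have h2 := congrFun hc i
      simp only [Pi.add_apply] at h2 ⊢
      rw [sub_outer_mulVec M (fun k => (S i j)⁻¹ * M k j) (S i) δ k,
          sub_outer_mulVec G (fun k => (S i j)⁻¹ * M k j) (A i) ξ k]
      have hs : S i ⬝ᵥ δ = (S *ᵥ δ) i := rfl
      have ha : A i ⬝ᵥ ξ = (A *ᵥ ξ) i := rfl
      rw [hs, ha]
      linear_combination ((S i j)⁻¹ * M k j) * h2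
  · rintro ⟨δ, ξ, hξ, hc, rfl⟩
    set t : ℝ := (S i j)⁻¹ * (b i - (S *ᵥ δ) i - (A *ᵥ ξ) i) with ht
    refine ⟨δ + Pi.single j t, ξ, hξ, ?_, ?_⟩
    · funext r
      have h1 := congrFun hc r
      simp only [Pi.add_apply,
        sub_outer_mulVec S (fun r => (S i j)⁻¹ * S r j) (S i) δ r,
        sub_outer_mulVec A (fun r => (S i j)⁻¹ * S r j) (A i) ξ r] at h1
      have hs : S i ⬝ᵥ δ = (S *ᵥ δ) i := rfl
      have ha : A i ⬝ᵥ ξ = (A *ᵥ ξ) i := rfl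
      rw [hs, ha] at h1
      simp only [Pi.add_apply, Matrix.mulVec_add, Matrix.mulVec_single, Pi.smul_apply,
        Matrix.col_apply, op_smul_eq_mul]
      rw [ht]
      field_simp at h1 ⊢
      linear_combination h1
    · funext k
      simp only [Pi.add_apply,
        sub_outer_mulVec M (fun k => (S i j)⁻¹ * M k j) (S i) δ k,
        sub_outer_mulVec G (fun k => (S i j)⁻¹ * M k j) (A i) ξ k]
      have hs : S i ⬝ᵥ δ = (S *ᵥ δ) i := rfl
      have ha : A i ⬝ᵥ ξ = (A *ᵥ ξ) i := rfl
      rw [hs, ha]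
      simp only [Matrix.mulVec_add, Matrix.mulVec_single, Pi.add_apply, Pi.smul_apply,
        Matrix.col_apply, op_smul_eq_mul]
      rw [ht]
      ring
end

section
/- Prediction-step enclosure for linear descriptor systems (Lemma 1): Let n_z ≤ n and write z ∈ ℝ^n as z = (z̃, ž) with z̃ ∈ ℝ^{n_z}, ž ∈ ℝ^{n−n_z}. Let Ã ∈ ℝ^{n_z×n}, B̃ ∈ ℝ^{n_z×n_u}, B̃_w ∈ ℝ^{n_z×n_w}, Ǎ ∈ ℝ^{(n−n_z)×n}, B̌ ∈ ℝ^{(n−n_z)×n_u}, B̌_w ∈ ℝ^{(n−n_z)×n_w}, and let u_{k−1}, u_k ∈ ℝ^{n_u}. Suppose z_{k−1} ∈ Ẑ = LZ(M̂, Ĝ, ĉ, Ŝ, Â, b̂) ⊆ ℝ^n, w_{k−1}, w_k ∈ W = LZ(M_w, G_w, c_w, S_w, A_w, b_w) ⊆ ℝ^{n_w}, and that z_k = (z̃_k, ž_k) satisfies z̃_k = Ã z_{k−1} + B̃ u_{k−1} + B̃_w w_{k−1} and 0 = Ǎ z_k + B̌ u_k + B̌_w w_k. Then z_k ∈ Z̄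 = LZ(M̄, Ḡ, c̄, S̄, Ā, b̄), where, with block columns ordered as (δ_{k−1}, ϑ_{k−1}, ϑ_k, δ_R) for lines and (ξ_{k−1}, φ_{k−1}, φ_k) for generators: c̄ = [Ã ĉ + B̃ u_{k−1} + B̃_w c_w; 0_{n−n_z}]; M̄ = [(Ã M̂, B̃_w M_w, 0, 0); (0, 0, 0, I_{n−n_z})]; Ḡ = [(Ã Ĝ, B̃_w G_w, 0); (0, 0, 0)]; S̄ has top block rows blkdiag(Ŝ, S_w, S_w) with a zero column block for δ_R, and bottom row (Ǎ [Ã M̂; 0], Ǎ [B̃_w M_w; 0], B̌_w M_w, Ǎ [0; I_{n−n_z}]); Ā has top block rows blkdiag(Â, A_w, A_w) and bottom row (Ǎ [Ã Ĝ; 0], Ǎ [B̃_w G_w; 0], B̌_w G_w); and b̄ = [b̂; b_w; b_w; −Ǎ [Ã ĉ + B̃ u_{k−1} + B̃_w c_w; 0_{n−n_z}] − B̌ u_k − B̌_w c_w]. -/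
open Matrix

/-- Prediction-step enclosure for linear descriptor systems (Lemma 1).
The state index is `α ⊕ β` where `α` carries the dynamic part `z̃` and `β` the static
part `ž`.  If `z_{k-1} ∈ Ẑ`, `w_{k-1}, w_k ∈ W`, the dynamics
`z̃_k = Ã z_{k-1} + B̃ u_{k-1} + B̃_w w_{k-1}` hold and the static constraint
`0 = Ǎ z_k + B̌ u_k + B̌_w w_k` holds, then `z_k ∈ Z̄ = LZ(M̄,Ḡ,c̄,S̄,Ā,b̄)` with the
block matrices of Lemma 1 (line blocks ordered `(δ_{k−1}, ϑ_{k−1}, ϑ_k, δ_R)`,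
generator blocks ordered `(ξ_{k−1}, φ_{k−1}, φ_k)`). -/
theorem lz_prediction_step
    {α β υ ω dh gh ch dw gw cw' : Type*}
    [Fintype α] [Fintype β] [DecidableEq β] [Fintype υ] [Fintype ω]
    [Fintype dh] [Fintype gh] [Fintype dw] [Fintype gw]
    (tA : Matrix α (α ⊕ β) ℝ) (tB : Matrix α υ ℝ) (tBw : Matrix α ω ℝ)
    (cA : Matrix β (α ⊕ β) ℝ) (cB : Matrix β υ ℝ) (cBw : Matrix β ω ℝ)
    (u0 u1 : υ → ℝ)
    (hM : Matrix (α ⊕ β) dh ℝ) (hG : Matrix (α ⊕ β) gh ℝ) (hc : (α ⊕ β) → ℝ)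
    (hS : Matrix ch dh ℝ) (hA : Matrix ch gh ℝ) (hb : ch → ℝ)
    (Mw : Matrix ω dw ℝ) (Gw : Matrix ω gw ℝ) (cw : ω → ℝ)
    (Sw : Matrix cw' dw ℝ) (Aw : Matrix cw' gw ℝ) (bw : cw' → ℝ)
    (zprev zk : (α ⊕ β) → ℝ) (wprev wk : ω → ℝ)
    (hz : zprev ∈ LZ hM hG hc hS hA hb)
    (hw1 : wprev ∈ LZ Mw Gw cw Sw Aw bw)
    (hw2 : wk ∈ LZ Mw Gw cw Sw Aw bw)
    (hdyn : ∀ a, zk (Sum.inl a) = (tA *ᵥ zprev + tB *ᵥ u0 + tBw *ᵥ wprev) a)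
    (hstat : cA *ᵥ zk + cB *ᵥ u1 + cBw *ᵥ wk = 0) :
    zk ∈ LZ
      -- M̄
      (fromBlocks (fromCols (tA * hM) (tBw * Mw)) 0
                  0 (fromCols (0 : Matrix β dw ℝ) (1 : Matrix β β ℝ)))
      -- Ḡ
      (fromBlocks (fromCols (tA * hG) (tBw * Gw)) (0 : Matrix α gw ℝ) 0 0)
      -- c̄
      (Sum.elim (tA *ᵥ hc + tB *ᵥ u0 + tBw *ᵥ cw) 0)
      -- S̄
      (fromRows
        (fromBlocks (fromBlocks hS 0 0 Sw) 0
                    0 (fromCols Sw (0 : Matrix cw' β ℝ)))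
        (fromCols
          (fromCols (cA * fromRows (tA * hM) (0 : Matrix β dh ℝ))
                       (cA * fromRows (tBw * Mw) (0 : Matrix β dw ℝ)))
          (fromCols (cBw * Mw)
                       (cA * fromRows (0 : Matrix α β ℝ) (1 : Matrix β β ℝ)))))
      -- Ā
      (fromRows
        (fromBlocks (fromBlocks hA 0 0 Aw) 0 0 Aw)
        (fromCols
          (fromCols (cA * fromRows (tA * hG) (0 : Matrix β gh ℝ))
                       (cA * fromRows (tBw * Gw) (0 : Matrix β gw ℝ)))
          (cBw * Gw)))
      -- b̄
      (Sum.elim (Sum.elim (Sum.elim hb bw) bw)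
        (-(cA *ᵥ (Sum.elim (tA *ᵥ hc + tB *ᵥ u0 + tBw *ᵥ cw) 0))
          - cB *ᵥ u1 - cBw *ᵥ cw)) := by
  obtain ⟨δh, ξh, hξh, hch, hxh⟩ := hz
  obtain ⟨θ0, φ0, hφ0, hc0, hx0⟩ := hw1
  obtain ⟨θ1, φ1, hφ1, hc1, hx1⟩ := hw2
  refine ⟨Sum.elim (Sum.elim δh θ0) (Sum.elim θ1 (fun b => zk (Sum.inr b))),
    Sum.elim (Sum.elim ξh φ0) φ1, ?_, ?_, ?_⟩
  · rintro ((i | i) | i)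
    · exact hξh i
    · exact hφ0 i
    · exact hφ1 i
  · have hzk : zk = Sum.elim (tA *ᵥ zprev + tB *ᵥ u0 + tBw *ᵥ wprev) (fun b => zk (Sum.inr b)) := by
      ext (a | b)
      · exact hdyn a
      · rfl
    have hstat' : cA *ᵥ zk = - (cB *ᵥ u1) - cBw *ᵥ wk := by
      have := hstat
      rw [add_assoc] at this
      linear_combination (norm := module) this
    funext i
    rcases i with ((j | j) | j) | j
    · simpa [fromBlocks_mulVec, Sum.elim_comp_inl, Sum.elim_comp_inr] using congrFun hch j
    · simpa [fromBlocks_mulVec, Sum.elim_comp_inl, Sum.elim_comp_inr] using congrFun hc0 j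
    · simpa [fromBlocks_mulVec, Sum.elim_comp_inl, Sum.elim_comp_inr] using congrFun hc1 j
    · simp only [Pi.add_apply, fromRows_mulVec, fromBlocks_mulVec,
        fromCols_mulVec_sumElim, Sum.elim_inl, Sum.elim_inr, Pi.zero_apply,
        mulVec_mulVec, Sum.elim_comp_inl, Sum.elim_comp_inr, fromRows_mulVec]
      set cb : (α ⊕ β) → ℝ := Sum.elim (tA *ᵥ hc + tB *ᵥ u0 + tBw *ᵥ cw) 0 with hcb
      have e1 : (cA * fromRows (tA * hM) (0 : Matrix β dh ℝ)) *ᵥ δh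
          = cA *ᵥ Sum.elim ((tA * hM) *ᵥ δh) 0 := by
        rw [← mulVec_mulVec, fromRows_mulVec, zero_mulVec]
      have e2 : (cA * fromRows (tBw * Mw) (0 : Matrix β dw ℝ)) *ᵥ θ0
          = cA *ᵥ Sum.elim ((tBw * Mw) *ᵥ θ0) 0 := by
        rw [← mulVec_mulVec, fromRows_mulVec, zero_mulVec]
      have e3 : (cA * fromRows (tA * hG) (0 : Matrix β gh ℝ)) *ᵥ ξh
          = cA *ᵥ Sum.elim ((tA * hG) *ᵥ ξh) 0 := by
        rw [← mulVec_mulVec, fromRows_mulVec, zero_mulVec]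
      have e4 : (cA * fromRows (tBw * Gw) (0 : Matrix β gw ℝ)) *ᵥ φ0
          = cA *ᵥ Sum.elim ((tBw * Gw) *ᵥ φ0) 0 := by
        rw [← mulVec_mulVec, fromRows_mulVec, zero_mulVec]
      have e5 : (cA * fromRows (0 : Matrix α β ℝ) (1 : Matrix β β ℝ)) *ᵥ (fun b => zk (Sum.inr b))
          = cA *ᵥ Sum.elim (0 : α → ℝ) (fun b => zk (Sum.inr b)) := by
        rw [← mulVec_mulVec, fromRows_mulVec, zero_mulVec, one_mulVec]
      have hsum : Sum.elim ((tA * hM) *ᵥ δh) (0 : β → ℝ)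
          + Sum.elim ((tBw * Mw) *ᵥ θ0) 0
          + Sum.elim (0 : α → ℝ) (fun b => zk (Sum.inr b))
          + Sum.elim ((tA * hG) *ᵥ ξh) 0
          + Sum.elim ((tBw * Gw) *ᵥ φ0) 0 = zk - cb := by
        funext i
        rcases i with a | b
        · have := hdyn a
          simp only [hcb, Pi.add_apply, Pi.sub_apply, Sum.elim_inl, Pi.zero_apply,
            mulVec_mulVec] at this ⊢
          rw [this, hxh, hx0]
          simp only [mulVec_add, Pi.add_apply, ← mulVec_mulVec]
          ring
        · simp [hcb]
      have h2 : (cBw * Mw) *ᵥ θ1 + (cBw * Gw) *ᵥ φ1 = cBw *ᵥ (wk - cw) := by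
        have hwc : wk - cw = Mw *ᵥ θ1 + Gw *ᵥ φ1 := by rw [hx1]; abel
        rw [← mulVec_mulVec, ← mulVec_mulVec, ← mulVec_add, hwc]
      have main : cA *ᵥ Sum.elim ((tA * hM) *ᵥ δh) (0 : β → ℝ)
          + cA *ᵥ Sum.elim ((tBw * Mw) *ᵥ θ0) 0
          + ((cBw * Mw) *ᵥ θ1 + cA *ᵥ Sum.elim (0 : α → ℝ) (fun b => zk (Sum.inr b)))
          + (cA *ᵥ Sum.elim ((tA * hG) *ᵥ ξh) 0 + cA *ᵥ Sum.elim ((tBw * Gw) *ᵥ φ0) 0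
            + (cBw * Gw) *ᵥ φ1)
          = -(cA *ᵥ cb) - cB *ᵥ u1 - cBw *ᵥ cw := by
        have h1 : cA *ᵥ Sum.elim ((tA * hM) *ᵥ δh) (0 : β → ℝ)
            + cA *ᵥ Sum.elim ((tBw * Mw) *ᵥ θ0) 0
            + cA *ᵥ Sum.elim (0 : α → ℝ) (fun b => zk (Sum.inr b))
            + cA *ᵥ Sum.elim ((tA * hG) *ᵥ ξh) 0
            + cA *ᵥ Sum.elim ((tBw * Gw) *ᵥ φ0) 0 = cA *ᵥ (zk - cb) := by
          rw [← hsum]; simp only [mulVec_add]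
        calc _ = cA *ᵥ (zk - cb) + cBw *ᵥ (wk - cw) := by rw [← h1, ← h2]; abel
          _ = _ := by rw [mulVec_sub, mulVec_sub, hstat']; abel
      rw [e1, e2, e3, e4, e5]
      have := congrFun main j
      simp only [Pi.add_apply, Pi.sub_apply, Pi.neg_apply] at this ⊢
      linarith
  · funext i
    rcases i with a | b
    · simp only [Pi.add_apply, fromBlocks_mulVec, Sum.elim_comp_inl, Sum.elim_comp_inr,
        fromCols_mulVec_sumElim, Sum.elim_inl, mulVec_mulVec, zero_mulVec, Pi.zero_apply]
      rw [hdyn a, hxh, hx0]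
      simp only [mulVec_add, Pi.add_apply, ← mulVec_mulVec]
      ring
    · simp [fromBlocks_mulVec, Sum.elim_comp_inl, Sum.elim_comp_inr, one_mulVec]
end

section
/- Exactness of the prediction step (Remark 4): In the setting of Lemma 1 (same matrices Ã, B̃, B̃_w, Ǎ, B̌, B̌_w, inputs u_{k−1}, u_k, line zonotopes Ẑ ⊆ ℝ^n and W ⊆ ℝ^{n_w}, and Z̄ = LZ(M̄, Ḡ, c̄, S̄, Ā, b̄) constructed exactly as in Lemma 1), the enclosure is exact: Z̄ = { z_k = (Ã z_{k−1} + B̃ u_{k−1} + B̃_w w_{k−1}, ž_k) : z_{k−1} ∈ Ẑ, ž_k ∈ ℝ^{n−n_z}, w_{k−1} ∈ W, w_k ∈ W, and Ǎ z_k + B̌ u_k + B̌_w w_k = 0 }, i.e. Z̄ equals exactly the feasible state set at time k, not merely an outer enclosure. -/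
open Matrix

private lemma fromColumns_mulVec' {m n₁ n₂ : Type*} [Fintype n₁] [Fintype n₂]
    (A : Matrix m n₁ ℝ) (B : Matrix m n₂ ℝ) (x : n₁ ⊕ n₂ → ℝ) :
    fromCols A B *ᵥ x = A *ᵥ (x ∘ Sum.inl) + B *ᵥ (x ∘ Sum.inr) := by
  conv_lhs => rw [← Sum.elim_comp_inl_inr x]
  rw [fromCols_mulVec_sumElim]

private lemma mulVec_apply' {m n : Type*} [Fintype n] (M : Matrix m n ℝ) (v : n → ℝ) (i : m) :
    (M *ᵥ v) i = ∑ j, M i j * v j := rfl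

/-- Exactness of the prediction step (Remark 4): the line zonotope `Z̄` of Lemma 1 equals
exactly the feasible state set at time `k`:
`Z̄ = {z_k = (Ã z_{k−1} + B̃ u_{k−1} + B̃_w w_{k−1}, ž_k) : z_{k−1} ∈ Ẑ, ž_k ∈ ℝ^{n−n_z},
w_{k−1}, w_k ∈ W, Ǎ z_k + B̌ u_k + B̌_w w_k = 0}`. -/
theorem lz_prediction_step_exact
    {α β υ ω dh gh ch dw gw cw' : Type*}
    [Fintype α] [Fintype β] [DecidableEq β] [Fintype υ] [Fintype ω]
    [Fintype dh] [Fintype gh] [Fintype dw] [Fintype gw]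
    (tA : Matrix α (α ⊕ β) ℝ) (tB : Matrix α υ ℝ) (tBw : Matrix α ω ℝ)
    (cA : Matrix β (α ⊕ β) ℝ) (cB : Matrix β υ ℝ) (cBw : Matrix β ω ℝ)
    (u0 u1 : υ → ℝ)
    (hM : Matrix (α ⊕ β) dh ℝ) (hG : Matrix (α ⊕ β) gh ℝ) (hc : (α ⊕ β) → ℝ)
    (hS : Matrix ch dh ℝ) (hA : Matrix ch gh ℝ) (hb : ch → ℝ)
    (Mw : Matrix ω dw ℝ) (Gw : Matrix ω gw ℝ) (cw : ω → ℝ)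
    (Sw : Matrix cw' dw ℝ) (Aw : Matrix cw' gw ℝ) (bw : cw' → ℝ) :
    LZ
      -- M̄
      (fromBlocks (fromCols (tA * hM) (tBw * Mw)) 0
                  0 (fromCols (0 : Matrix β dw ℝ) (1 : Matrix β β ℝ)))
      -- Ḡ
      (fromBlocks (fromCols (tA * hG) (tBw * Gw)) (0 : Matrix α gw ℝ) 0 0)
      -- c̄
      (Sum.elim (tA *ᵥ hc + tB *ᵥ u0 + tBw *ᵥ cw) 0)
      -- S̄
      (fromRows
        (fromBlocks (fromBlocks hS 0 0 Sw) 0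
                    0 (fromCols Sw (0 : Matrix cw' β ℝ)))
        (fromCols
          (fromCols (cA * fromRows (tA * hM) (0 : Matrix β dh ℝ))
                       (cA * fromRows (tBw * Mw) (0 : Matrix β dw ℝ)))
          (fromCols (cBw * Mw)
                       (cA * fromRows (0 : Matrix α β ℝ) (1 : Matrix β β ℝ)))))
      -- Ā
      (fromRows
        (fromBlocks (fromBlocks hA 0 0 Aw) 0 0 Aw)
        (fromCols
          (fromCols (cA * fromRows (tA * hG) (0 : Matrix β gh ℝ))
                       (cA * fromRows (tBw * Gw) (0 : Matrix β gw ℝ)))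
          (cBw * Gw)))
      -- b̄
      (Sum.elim (Sum.elim (Sum.elim hb bw) bw)
        (-(cA *ᵥ (Sum.elim (tA *ᵥ hc + tB *ᵥ u0 + tBw *ᵥ cw) 0))
          - cB *ᵥ u1 - cBw *ᵥ cw))
    =
    {zk : (α ⊕ β) → ℝ |
      ∃ zprev ∈ LZ hM hG hc hS hA hb,
      ∃ wprev ∈ LZ Mw Gw cw Sw Aw bw,
      ∃ wk ∈ LZ Mw Gw cw Sw Aw bw,
        (∀ a, zk (Sum.inl a) = (tA *ᵥ zprev + tB *ᵥ u0 + tBw *ᵥ wprev) a)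
        ∧ cA *ᵥ zk + cB *ᵥ u1 + cBw *ᵥ wk = 0} := by
  ext zk
  simp only [LZ, Set.mem_setOf_eq]
  constructor
  · rintro ⟨δ, ξ, hξ, hcon, hx⟩
    set δh : dh → ℝ := fun i => δ (Sum.inl (Sum.inl i)) with hδh
    set δw0 : dw → ℝ := fun i => δ (Sum.inl (Sum.inr i)) with hδw0
    set δw1 : dw → ℝ := fun i => δ (Sum.inr (Sum.inl i)) with hδw1
    set zc : β → ℝ := fun i => δ (Sum.inr (Sum.inr i)) with hzc
    set ξh : gh → ℝ := fun i => ξ (Sum.inl (Sum.inl i)) with hξh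
    set ξw0 : gw → ℝ := fun i => ξ (Sum.inl (Sum.inr i)) with hξw0
    set ξw1 : gw → ℝ := fun i => ξ (Sum.inr i) with hξw1
    refine ⟨hc + hM *ᵥ δh + hG *ᵥ ξh, ⟨δh, ξh, fun i => hξ _, ?_, rfl⟩,
      cw + Mw *ᵥ δw0 + Gw *ᵥ ξw0, ⟨δw0, ξw0, fun i => hξ _, ?_, rfl⟩,
      cw + Mw *ᵥ δw1 + Gw *ᵥ ξw1, ⟨δw1, ξw1, fun i => hξ _, ?_, rfl⟩, ?_, ?_⟩
    · funext i
      have h := congrFun hcon (Sum.inl (Sum.inl (Sum.inl i)))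
      simp only [Pi.add_apply, fromRows_mulVec, fromBlocks_mulVec, fromColumns_mulVec',
        Sum.elim_inl, Sum.elim_inr, zero_mulVec, add_zero, zero_add, Matrix.zero_mulVec,
        Function.comp_def] at h ⊢
      exact h
    · funext i
      have h := congrFun hcon (Sum.inl (Sum.inl (Sum.inr i)))
      simp only [Pi.add_apply, fromRows_mulVec, fromBlocks_mulVec, fromColumns_mulVec',
        Sum.elim_inl, Sum.elim_inr, zero_mulVec, add_zero, zero_add,
        Function.comp_def] at h ⊢
      exact h
    · funext i
      have h := congrFun hcon (Sum.inl (Sum.inr i))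
      simp only [Pi.add_apply, fromRows_mulVec, fromBlocks_mulVec, fromColumns_mulVec',
        Sum.elim_inl, Sum.elim_inr, zero_mulVec, add_zero, zero_add,
        Function.comp_def] at h ⊢
      exact h
    · intro a
      rw [hx]
      simp only [Pi.add_apply, fromBlocks_mulVec, fromColumns_mulVec', Sum.elim_inl,
        Sum.elim_inr, zero_mulVec, add_zero, zero_add, Matrix.mulVec_add,
        ← Matrix.mulVec_mulVec, Function.comp_def]
      ring
    · funext j
      have h := congrFun hcon (Sum.inr j)
      rw [hx]
      simp only [Pi.add_apply, Pi.sub_apply, Pi.neg_apply, Pi.zero_apply,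
        fromRows_mulVec, fromBlocks_mulVec, fromColumns_mulVec',
        Sum.elim_inl, Sum.elim_inr, zero_mulVec, add_zero, zero_add,
        Matrix.one_mulVec, Matrix.mulVec_add, ← Matrix.mulVec_mulVec,
        Function.comp_def, mulVec_apply', Fintype.sum_sum_type,
        mul_add, mul_zero, Finset.sum_add_distrib, Finset.sum_const_zero] at h ⊢
      linarith [h]
  · rintro ⟨zprev, ⟨δh, ξh, hξh, hch, hzp⟩, wprev, ⟨δw0, ξw0, hξ0, hc0, hw0⟩,
      wk, ⟨δw1, ξw1, hξ1, hc1, hw1⟩, hzl, hlin⟩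
    subst hzp hw0 hw1
    refine ⟨Sum.elim (Sum.elim δh δw0) (Sum.elim δw1 (fun b => zk (Sum.inr b))),
      Sum.elim (Sum.elim ξh ξw0) ξw1, ?_, ?_, ?_⟩
    · rintro ((i|i)|i)
      · simpa using hξh i
      · simpa using hξ0 i
      · simpa using hξ1 i
    · funext i
      rcases i with ((i|i)|i)|j
      · have h := congrFun hch i
        simp only [Pi.add_apply, fromRows_mulVec, fromBlocks_mulVec, fromColumns_mulVec',
          Sum.elim_inl, Sum.elim_inr, zero_mulVec, add_zero, zero_add,
          Function.comp_def] at h ⊢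
        exact h
      · have h := congrFun hc0 i
        simp only [Pi.add_apply, fromRows_mulVec, fromBlocks_mulVec, fromColumns_mulVec',
          Sum.elim_inl, Sum.elim_inr, zero_mulVec, add_zero, zero_add,
          Function.comp_def] at h ⊢
        exact h
      · have h := congrFun hc1 i
        simp only [Pi.add_apply, fromRows_mulVec, fromBlocks_mulVec, fromColumns_mulVec',
          Sum.elim_inl, Sum.elim_inr, zero_mulVec, add_zero, zero_add,
          Function.comp_def] at h ⊢
        exact h
      · have h := congrFun hlin j
        simp only [Pi.add_apply, Pi.sub_apply, Pi.neg_apply, Pi.zero_apply,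
          fromRows_mulVec, fromBlocks_mulVec, fromColumns_mulVec',
          Sum.elim_inl, Sum.elim_inr, zero_mulVec, add_zero, zero_add,
          Matrix.one_mulVec, Matrix.mulVec_add, ← Matrix.mulVec_mulVec,
          Function.comp_def, mulVec_apply', Fintype.sum_sum_type, hzl,
          mul_add, mul_zero, Finset.sum_add_distrib, Finset.sum_const_zero] at h ⊢
        linarith [h]
    · funext p
      rcases p with a | b
      · have h := hzl a
        simp only [Pi.add_apply, Pi.zero_apply, fromBlocks_mulVec, fromColumns_mulVec',
          Sum.elim_inl, Sum.elim_inr, zero_mulVec, add_zero, zero_add,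
          Matrix.mulVec_add, ← Matrix.mulVec_mulVec, Function.comp_def] at h ⊢
        rw [h]; ring
      · simp only [Pi.add_apply, Pi.zero_apply, fromBlocks_mulVec, fromColumns_mulVec',
          Sum.elim_inl, Sum.elim_inr, zero_mulVec, add_zero, zero_add,
          Matrix.one_mulVec, Function.comp_def]
end

section
/- Separation condition for line zonotopes with affine input dependence (Theorem 1, abstract form): For i = 1, 2 let Y_i(u) = LZ(M_i, G_i, c_i + P_i u, S_i, A_i, b_i + Q_i u) ⊆ ℝ^p be line zonotopes whose centers and constraint vectors depend affinely on u ∈ ℝ^m, with P_i ∈ ℝ^{p×m} and Q_i ∈ ℝ^{n_{c_i}×m}. Then Y_1(u) ∩ Y_2(u) = ∅ if and only if the stacked vector [(P_2 − P_1)u; Q_1 u; Q_2 u] does NOT belong to the line zonotope 𝒴 with lines [(M_1, −M_2); (S_1, 0); (0, S_2)], generators [(G_1, −G_2); (A_1, 0); (0, A_2)], and center [c_1 − c_2; −b_1; −b_2] (and no constraints). -/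
open Matrix

/-- Separation condition for line zonotopes with affine input dependence (Theorem 1,
abstract form): `Y_1(u) ∩ Y_2(u) = ∅` iff `[(P_2 − P_1)u; Q_1 u; Q_2 u]` does not belong to
the (unconstrained) line zonotope with lines `[(M_1,−M_2);(S_1,0);(0,S_2)]`, generators
`[(G_1,−G_2);(A_1,0);(0,A_2)]` and center `[c_1 − c_2; −b_1; −b_2]`. -/
theorem lz_separation_iff {p m d1 g1 nc1 d2 g2 nc2 : Type*}
    [Fintype m] [Fintype d1] [Fintype g1] [Fintype d2] [Fintype g2]
    (M1 : Matrix p d1 ℝ) (G1 : Matrix p g1 ℝ) (c1 : p → ℝ)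
    (S1 : Matrix nc1 d1 ℝ) (A1 : Matrix nc1 g1 ℝ) (b1 : nc1 → ℝ)
    (P1 : Matrix p m ℝ) (Q1 : Matrix nc1 m ℝ)
    (M2 : Matrix p d2 ℝ) (G2 : Matrix p g2 ℝ) (c2 : p → ℝ)
    (S2 : Matrix nc2 d2 ℝ) (A2 : Matrix nc2 g2 ℝ) (b2 : nc2 → ℝ)
    (P2 : Matrix p m ℝ) (Q2 : Matrix nc2 m ℝ)
    (u : m → ℝ) :
    LZ M1 G1 (c1 + P1 *ᵥ u) S1 A1 (b1 + Q1 *ᵥ u)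
        ∩ LZ M2 G2 (c2 + P2 *ᵥ u) S2 A2 (b2 + Q2 *ᵥ u) = ∅ ↔
      Sum.elim ((P2 - P1) *ᵥ u) (Sum.elim (Q1 *ᵥ u) (Q2 *ᵥ u)) ∉
        LZ (fromRows (fromCols M1 (-M2)) (fromBlocks S1 0 0 S2))
           (fromRows (fromCols G1 (-G2)) (fromBlocks A1 0 0 A2))
           (Sum.elim (c1 - c2) (Sum.elim (-b1) (-b2)))
           (0 : Matrix (Fin 0) (d1 ⊕ d2) ℝ) (0 : Matrix (Fin 0) (g1 ⊕ g2) ℝ)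
           (0 : Fin 0 → ℝ) := by
  rw [← Set.not_nonempty_iff_eq_empty]
  apply not_congr
  constructor
  · rintro ⟨x, ⟨δ1, ξ1, h1, hc1, hx1⟩, ⟨δ2, ξ2, h2, hc2, hx2⟩⟩
    have key : c1 + P1 *ᵥ u + M1 *ᵥ δ1 + G1 *ᵥ ξ1
        = c2 + P2 *ᵥ u + M2 *ᵥ δ2 + G2 *ᵥ ξ2 := hx1.symm.trans hx2
    refine ⟨Sum.elim δ1 δ2, Sum.elim ξ1 ξ2, ?_, ?_, ?_⟩
    · rintro (i | i)
      exacts [h1 i, h2 i]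
    · funext i; exact i.elim0
    · funext j
      simp only [fromRows_mulVec, fromCols_mulVec_sumElim, fromBlocks_mulVec,
        Matrix.zero_mulVec, Matrix.neg_mulVec, Matrix.sub_mulVec, Sum.elim_comp_inl, Sum.elim_comp_inr, Pi.zero_apply]
      rcases j with i | i | i
      · have := congrFun key i
        simp only [Pi.zero_apply, Pi.add_apply, Pi.sub_apply, Pi.neg_apply, Sum.elim_inl] at this ⊢
        linarith
      · have := congrFun hc1 i
        simp only [Pi.zero_apply, Pi.add_apply, Pi.sub_apply, Pi.neg_apply, Sum.elim_inr, Sum.elim_inl]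
          at this ⊢
        linarith
      · have := congrFun hc2 i
        simp only [Pi.zero_apply, Pi.add_apply, Pi.sub_apply, Pi.neg_apply, Sum.elim_inr] at this ⊢
        linarith
  · rintro ⟨δ, ξ, hξ, -, heq⟩
    refine ⟨c1 + P1 *ᵥ u + M1 *ᵥ (δ ∘ Sum.inl) + G1 *ᵥ (ξ ∘ Sum.inl),
      ⟨δ ∘ Sum.inl, ξ ∘ Sum.inl, fun i => hξ (Sum.inl i), ?_, rfl⟩,
      ⟨δ ∘ Sum.inr, ξ ∘ Sum.inr, fun i => hξ (Sum.inr i), ?_, ?_⟩⟩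
    · funext i
      have := congrFun heq (Sum.inr (Sum.inl i))
      rw [show δ = Sum.elim (δ ∘ Sum.inl) (δ ∘ Sum.inr) by funext j; cases j <;> rfl,
        show ξ = Sum.elim (ξ ∘ Sum.inl) (ξ ∘ Sum.inr) by funext j; cases j <;> rfl] at this
      simp only [fromRows_mulVec, fromCols_mulVec_sumElim, fromBlocks_mulVec,
        Matrix.zero_mulVec, Sum.elim_comp_inl, Sum.elim_comp_inr, Pi.zero_apply, Pi.add_apply, Pi.neg_apply, Sum.elim_inr, Sum.elim_inl] at this
      simp only [Pi.add_apply]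
      linarith
    · funext i
      have := congrFun heq (Sum.inr (Sum.inr i))
      rw [show δ = Sum.elim (δ ∘ Sum.inl) (δ ∘ Sum.inr) by funext j; cases j <;> rfl,
        show ξ = Sum.elim (ξ ∘ Sum.inl) (ξ ∘ Sum.inr) by funext j; cases j <;> rfl] at this
      simp only [fromRows_mulVec, fromCols_mulVec_sumElim, fromBlocks_mulVec,
        Matrix.zero_mulVec, Sum.elim_comp_inl, Sum.elim_comp_inr, Pi.zero_apply, Pi.add_apply, Pi.neg_apply, Sum.elim_inr] at this
      simp only [Pi.add_apply]
      linarith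
    · funext i
      have := congrFun heq (Sum.inl i)
      rw [show δ = Sum.elim (δ ∘ Sum.inl) (δ ∘ Sum.inr) by funext j; cases j <;> rfl,
        show ξ = Sum.elim (ξ ∘ Sum.inl) (ξ ∘ Sum.inr) by funext j; cases j <;> rfl] at this
      simp only [fromRows_mulVec, fromCols_mulVec_sumElim, fromBlocks_mulVec,
        Matrix.neg_mulVec, Matrix.sub_mulVec, Sum.elim_comp_inl, Sum.elim_comp_inr, Pi.add_apply, Pi.sub_apply, Pi.neg_apply,
        Sum.elim_inl] at this
      simp only [Pi.add_apply]
      linarith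
end

section
/- Linear-program characterization of non-membership in a line zonotope (Lemma 2): Let Z = LZ(M, G, c, S, A, b) ⊆ ℝ^n and p ∈ ℝ^n. Assume the equality system is feasible, i.e. there exist δ ∈ ℝ^{n_δ} and ξ ∈ ℝ^{n_g} with Mδ + Gξ + c = p and Sδ + Aξ = b. Define κ̂ = inf { κ ∈ ℝ : ∃ δ ∈ ℝ^{n_δ}, ξ ∈ ℝ^{n_g}, ‖ξ‖_∞ ≤ 1 + κ, Mδ + Gξ + c = p, Sδ + Aξ = b }. Then p ∉ Z if and only if κ̂ > 0. -/
open Matrix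

/-- Linear-program characterization of non-membership in a line zonotope (Lemma 2):
if the equality system `Mδ + Gξ + c = p`, `Sδ + Aξ = b` is feasible, then `p ∉ Z` iff
`κ̂ = inf {κ : ∃ δ ξ, ‖ξ‖_∞ ≤ 1 + κ, Mδ + Gξ + c = p, Sδ + Aξ = b} > 0`. -/
theorem lz_nonmembership_lp {n nδ ng nc : Type*} [Fintype nδ] [Fintype ng]
    (M : Matrix n nδ ℝ) (G : Matrix n ng ℝ) (c : n → ℝ)
    (S : Matrix nc nδ ℝ) (A : Matrix nc ng ℝ) (b : nc → ℝ) (p : n → ℝ)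
    (hfeas : ∃ (δ : nδ → ℝ) (ξ : ng → ℝ),
      M *ᵥ δ + G *ᵥ ξ + c = p ∧ S *ᵥ δ + A *ᵥ ξ = b) :
    p ∉ LZ M G c S A b ↔
      0 < sInf {κ : ℝ | ∃ (δ : nδ → ℝ) (ξ : ng → ℝ),
        (∀ i, |ξ i| ≤ 1 + κ) ∧ M *ᵥ δ + G *ᵥ ξ + c = p ∧ S *ᵥ δ + A *ᵥ ξ = b} := by
  classical
  obtain ⟨δ₀, ξ₀, h₁, h₂⟩ := hfeas
  set K := {κ : ℝ | ∃ (δ : nδ → ℝ) (ξ : ng → ℝ),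
        (∀ i, |ξ i| ≤ 1 + κ) ∧ M *ᵥ δ + G *ᵥ ξ + c = p ∧ S *ᵥ δ + A *ᵥ ξ = b} with hKdef
  have hmem : p ∈ LZ M G c S A b ↔ (0 : ℝ) ∈ K := by
    constructor
    · rintro ⟨δ, ξ, hb, he, hx⟩
      exact ⟨δ, ξ, fun i => by simpa using hb i, by rw [hx]; abel, he⟩
    · rintro ⟨δ, ξ, hb, he1, he2⟩
      exact ⟨δ, ξ, fun i => by simpa using hb i, he2, by rw [← he1]; abel⟩
  by_cases hng : Nonempty ng
  · haveI := hng
    set Ξ := {ξ : ng → ℝ | ∃ δ, M *ᵥ δ + G *ᵥ ξ + c = p ∧ S *ᵥ δ + A *ᵥ ξ = b} with hΞdef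
    have hΞne : ξ₀ ∈ Ξ := ⟨δ₀, h₁, h₂⟩
    -- Ξ is closed
    have hΞclosed : IsClosed Ξ := by
      let L : (nδ → ℝ) →ₗ[ℝ] (n → ℝ) × (nc → ℝ) :=
        (Matrix.mulVecLin M).prod (Matrix.mulVecLin S)
      have hrange : IsClosed ((LinearMap.range L : Submodule ℝ _) : Set ((n → ℝ) × (nc → ℝ))) :=
        Submodule.closed_of_finiteDimensional _
      let T : (ng → ℝ) →ₗ[ℝ] (n → ℝ) × (nc → ℝ) :=
        (Matrix.mulVecLin G).prod (Matrix.mulVecLin A)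
      have hT : Continuous T := T.continuous_of_finiteDimensional
      have hcont : Continuous (fun ξ : ng → ℝ => ((p - c, b) : (n → ℝ) × (nc → ℝ)) - T ξ) :=
        continuous_const.sub hT
      have hEq : Ξ = (fun ξ : ng → ℝ => ((p - c, b) : (n → ℝ) × (nc → ℝ)) - T ξ) ⁻¹'
          ((LinearMap.range L : Submodule ℝ _) : Set ((n → ℝ) × (nc → ℝ))) := by
        ext ξ
        simp only [hΞdef, Set.mem_setOf_eq, Set.mem_preimage, SetLike.mem_coe,
          LinearMap.mem_range, LinearMap.prod_apply, Function.prod, Matrix.mulVecLin_apply,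
          Prod.ext_iff, Prod.fst_sub, Prod.snd_sub, L, T]
        constructor
        · rintro ⟨δ, hδ1, hδ2⟩
          exact ⟨δ, by rw [← hδ1]; abel, by rw [← hδ2]; abel⟩
        · rintro ⟨δ, hδ1, hδ2⟩
          exact ⟨δ, by rw [hδ1]; abel, by rw [hδ2]; abel⟩
      rw [hEq]
      exact hrange.preimage hcont
    -- minimizer of the sup norm over Ξ
    obtain ⟨ξs, hξsΞ, hmin⟩ : ∃ ξ ∈ Ξ, ∀ η ∈ Ξ, ‖ξ‖ ≤ ‖η‖ := by
      have hcpt : IsCompact (Ξ ∩ Metric.closedBall 0 ‖ξ₀‖) :=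
        (isCompact_closedBall _ _).inter_left hΞclosed
      obtain ⟨ξs, hξs, hm⟩ := hcpt.exists_isMinOn
        ⟨ξ₀, hΞne, by simp⟩ continuous_norm.continuousOn
      rw [isMinOn_iff] at hm
      refine ⟨ξs, hξs.1, fun η hη => ?_⟩
      by_cases h : ‖η‖ ≤ ‖ξ₀‖
      · exact hm η ⟨hη, by simpa [Metric.mem_closedBall, dist_zero_right] using h⟩
      · exact le_trans (hm ξ₀ ⟨hΞne, by simp⟩) (le_of_not_ge h)
    have hK : K = Set.Ici (‖ξs‖ - 1) := by
      ext κ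
      simp only [hKdef, Set.mem_setOf_eq, Set.mem_Ici]
      constructor
      · rintro ⟨δ, ξ, hb, he1, he2⟩
        have h0 : (0 : ℝ) ≤ 1 + κ := le_trans (abs_nonneg _) (hb (Classical.arbitrary ng))
        have hnorm : ‖ξ‖ ≤ 1 + κ := by
          rw [pi_norm_le_iff_of_nonneg h0]
          intro i
          simpa [Real.norm_eq_abs] using hb i
        have := hmin ξ ⟨δ, he1, he2⟩
        linarith
      · intro hκ
        obtain ⟨δ, hδ1, hδ2⟩ := hξsΞ
        refine ⟨δ, ξs, fun i => ?_, hδ1, hδ2⟩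
        have h1 : |ξs i| ≤ ‖ξs‖ := by
          simpa [Real.norm_eq_abs] using norm_le_pi_norm ξs i
        linarith
    rw [hmem, hK, csInf_Ici]
    simp only [Set.mem_Ici, not_le]
  · -- ng is empty: K = univ, sInf = 0, and p ∈ LZ
    have hK : K = Set.univ := by
      ext κ
      simp only [hKdef, Set.mem_setOf_eq, Set.mem_univ, iff_true]
      exact ⟨δ₀, ξ₀, fun i => absurd ⟨i⟩ hng, h₁, h₂⟩
    have hp : p ∈ LZ M G c S A b :=
      ⟨δ₀, ξ₀, fun i => absurd ⟨i⟩ hng, h₂, by rw [← h₁]; abel⟩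
    have hinf : sInf K = 0 := by
      rw [hK]
      exact Real.sInf_of_not_bddBelow (by simp)
    rw [hinf]
    simp [hp]
end

section
/- Reduction from a line zonotope to a zonotope by block elimination of lines (Lemma 3): Let r, s, m, g ∈ ℕ, and consider matrices M⁺ ∈ ℝ^{r×r} invertible, M⁻ ∈ ℝ^{s×r}, G⁺ ∈ ℝ^{r×g}, G⁻ ∈ ℝ^{s×g}, c⁺ ∈ ℝ^r, c⁻ ∈ ℝ^s, N⁺ ∈ ℝ^{r×m}, N⁻ ∈ ℝ^{s×m}. Define G̊ = G⁻ − M⁻ (M⁺)^{-1} G⁺, c̊ = c⁻ − M⁻ (M⁺)^{-1} c⁺, and N̊ = N⁻ − M⁻ (M⁺)^{-1} N⁺. Then for every ξ_u ∈ ℝ^m: the vector [N⁺; N⁻] ξ_u does NOT belong to the (unconstrained) line zonotope { [M⁺; M⁻] δ + [G⁺; G⁻] ξ + [c⁺; c⁻] : δ ∈ ℝ^r, ‖ξ‖_∞ ≤ 1 } if and only if N̊ ξ_u does NOT belong to the zonotope { G̊ ξ + c̊ : ‖ξ‖_∞ ≤ 1 }. -/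
open Matrix

/-- Reduction from a line zonotope to a zonotope by block elimination of lines (Lemma 3):
with `M⁺` invertible, `G̊ = G⁻ − M⁻ (M⁺)⁻¹ G⁺`, `c̊ = c⁻ − M⁻ (M⁺)⁻¹ c⁺`,
`N̊ = N⁻ − M⁻ (M⁺)⁻¹ N⁺`, one has `[N⁺;N⁻]ξ_u ∉ LZ([M⁺;M⁻],[G⁺;G⁻],[c⁺;c⁻])` iff
`N̊ ξ_u ∉ {G̊ ξ + c̊ : ‖ξ‖_∞ ≤ 1}`. -/
theorem lz_to_zonotope_line_elimination {r s m g : ℕ}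
    (Mp : Matrix (Fin r) (Fin r) ℝ) (hMp : IsUnit Mp)
    (Mm : Matrix (Fin s) (Fin r) ℝ)
    (Gp : Matrix (Fin r) (Fin g) ℝ) (Gm : Matrix (Fin s) (Fin g) ℝ)
    (cp : Fin r → ℝ) (cm : Fin s → ℝ)
    (Np : Matrix (Fin r) (Fin m) ℝ) (Nm : Matrix (Fin s) (Fin m) ℝ)
    (ξu : Fin m → ℝ) :
    ((fromRows Np Nm) *ᵥ ξu ∉
        LZ (fromRows Mp Mm) (fromRows Gp Gm) (Sum.elim cp cm)
          (0 : Matrix (Fin 0) (Fin r) ℝ) (0 : Matrix (Fin 0) (Fin g) ℝ)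
          (0 : Fin 0 → ℝ)) ↔
      ((Nm - Mm * Mp⁻¹ * Np) *ᵥ ξu ∉
        LZ (0 : Matrix (Fin s) (Fin 0) ℝ) (Gm - Mm * Mp⁻¹ * Gp)
          (cm - (Mm * Mp⁻¹) *ᵥ cp)
          (0 : Matrix (Fin 0) (Fin 0) ℝ) (0 : Matrix (Fin 0) (Fin g) ℝ)
          (0 : Fin 0 → ℝ)) := by
  have hdet : IsUnit Mp.det := (isUnit_iff_isUnit_det Mp).mp hMp
  have hinv1 : Mp⁻¹ * Mp = 1 := nonsing_inv_mul Mp hdet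
  have hinv2 : Mp * Mp⁻¹ = 1 := mul_nonsing_inv Mp hdet
  rw [not_iff_not]
  constructor
  · rintro ⟨δ, ξ, hξ, -, heq⟩
    refine ⟨0, ξ, hξ, by simp [Matrix.ext_iff.symm, funext_iff], ?_⟩
    have eqp : Np *ᵥ ξu = cp + Mp *ᵥ δ + Gp *ᵥ ξ := by
      funext i
      simpa [fromRows_mulVec] using congrFun heq (Sum.inl i)
    have eqm : Nm *ᵥ ξu = cm + Mm *ᵥ δ + Gm *ᵥ ξ := by
      funext i
      simpa [fromRows_mulVec] using congrFun heq (Sum.inr i)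
    have hMmδ : (Mm * Mp⁻¹) *ᵥ (Mp *ᵥ δ) = Mm *ᵥ δ := by
      rw [mulVec_mulVec, Matrix.mul_assoc, hinv1, Matrix.mul_one]
    calc (Nm - Mm * Mp⁻¹ * Np) *ᵥ ξu
        = Nm *ᵥ ξu - (Mm * Mp⁻¹) *ᵥ (Np *ᵥ ξu) := by
          rw [sub_mulVec, mulVec_mulVec]
      _ = (cm + Mm *ᵥ δ + Gm *ᵥ ξ)
            - ((Mm * Mp⁻¹) *ᵥ cp + Mm *ᵥ δ + (Mm * Mp⁻¹) *ᵥ (Gp *ᵥ ξ)) := by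
          rw [eqp, eqm, mulVec_add, mulVec_add, hMmδ]
      _ = cm - (Mm * Mp⁻¹) *ᵥ cp + (0 : Matrix (Fin s) (Fin 0) ℝ) *ᵥ 0
            + (Gm - Mm * Mp⁻¹ * Gp) *ᵥ ξ := by
          rw [sub_mulVec, mulVec_mulVec]
          simp only [Matrix.zero_mulVec, add_zero]
          abel
  · rintro ⟨δ0, ξ, hξ, -, heq⟩
    set δ' : Fin r → ℝ := Mp⁻¹ *ᵥ (Np *ᵥ ξu - cp - Gp *ᵥ ξ) with hδ'
    have hMpδ : Mp *ᵥ δ' = Np *ᵥ ξu - cp - Gp *ᵥ ξ := by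
      rw [hδ', mulVec_mulVec, hinv2, one_mulVec]
    have eqp' : Np *ᵥ ξu = cp + Mp *ᵥ δ' + Gp *ᵥ ξ := by rw [hMpδ]; abel
    have heq' : Nm *ᵥ ξu = cm + Mm *ᵥ δ' + Gm *ᵥ ξ := by
      rw [sub_mulVec, sub_mulVec] at heq
      simp only [Matrix.zero_mulVec, add_zero] at heq
      have h3 : Mm *ᵥ δ' = (Mm * Mp⁻¹ * Np) *ᵥ ξu - (Mm * Mp⁻¹) *ᵥ cp
          - (Mm * Mp⁻¹ * Gp) *ᵥ ξ := by
        rw [hδ', mulVec_mulVec, Matrix.mul_assoc Mm Mp⁻¹, mulVec_sub, mulVec_sub,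
          mulVec_mulVec, mulVec_mulVec, ← Matrix.mul_assoc Mm Mp⁻¹ Np]
      have h4 := sub_eq_iff_eq_add.mp heq
      rw [h3, h4]
      abel
    refine ⟨δ', ξ, hξ, by simp [Matrix.ext_iff.symm, funext_iff], ?_⟩
    funext i
    cases i with
    | inl i => simpa [fromRows_mulVec] using congrFun eqp' i
    | inr i => simpa [fromRows_mulVec] using congrFun heq' i
end

section
/- Input parametrization equivalence for separation over a constrained input set: let U = {c_u + G_u ξ_u : ξ_u ∈ ℝ^{n_{g_u}}, ‖ξ_u‖_∞ ≤ 1, A_u ξ_u = b_u} ⊆ ℝ^m be a constrained zonotope, and let M ∈ ℝ^{p×n_δ}, G ∈ ℝ^{p×n_g}, c ∈ ℝ^p, S ∈ ℝ^{q×n_δ}, A ∈ ℝ^{q×n_g}, b ∈ ℝ^q, N ∈ ℝ^{p×m}, Ω ∈ ℝ^{q×m}. Then 0 ∉ LZ( M, (G, −N G_u), c − N c_u, [S; 0], [(A, −Ω G_u); (0, A_u)], [b + Ω c_u; b_u] ) if and only if for every u ∈ U one has 0 ∉ LZ(M, G, c − N u, S, A, b + Ω u). -/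
open Matrix

/-- Input parametrization equivalence for separation over a constrained input set
`U = {c_u + G_u ξ_u : ‖ξ_u‖_∞ ≤ 1, A_u ξ_u = b_u}`:
`0 ∉ LZ(M, (G, −N G_u), c − N c_u, [S;0], [(A,−Ω G_u);(0,A_u)], [b + Ω c_u; b_u])`
iff `0 ∉ LZ(M, G, c − N u, S, A, b + Ω u)` for every `u ∈ U`. -/
theorem lz_input_parametrization {p q nδ ng m gu cu' : Type*}
    [Fintype nδ] [Fintype ng] [Fintype m] [Fintype gu]
    (M : Matrix p nδ ℝ) (G : Matrix p ng ℝ) (c : p → ℝ)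
    (S : Matrix q nδ ℝ) (A : Matrix q ng ℝ) (b : q → ℝ)
    (N : Matrix p m ℝ) (Ω : Matrix q m ℝ)
    (Gu : Matrix m gu ℝ) (cu : m → ℝ) (Au : Matrix cu' gu ℝ) (bu : cu' → ℝ) :
    ((0 : p → ℝ) ∉
        LZ M (fromCols G (-(N * Gu))) (c - N *ᵥ cu)
          (fromRows S (0 : Matrix cu' nδ ℝ))
          (fromRows (fromCols A (-(Ω * Gu))) (fromCols (0 : Matrix cu' ng ℝ) Au))
          (Sum.elim (b + Ω *ᵥ cu) bu)) ↔
      ∀ u ∈ {u : m → ℝ | ∃ ξu : gu → ℝ,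
          (∀ i, |ξu i| ≤ 1) ∧ Au *ᵥ ξu = bu ∧ u = cu + Gu *ᵥ ξu},
        (0 : p → ℝ) ∉ LZ M G (c - N *ᵥ u) S A (b + Ω *ᵥ u) := by

  constructor
  · intro h u hu hmem
    obtain ⟨ξu, hξu, hAu, rfl⟩ := hu
    obtain ⟨δ, ξ, hξ, hc, hx⟩ := hmem
    apply h
    refine ⟨δ, Sum.elim ξ ξu, ?_, ?_, ?_⟩
    · intro i; cases i with
      | inl i => exact hξ i
      | inr i => exact hξu i
    · rw [fromRows_mulVec, fromRows_mulVec, fromCols_mulVec_sumElim,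
        fromCols_mulVec_sumElim]
      ext i
      cases i with
      | inl i =>
          simp only [Sum.elim_inl, Pi.add_apply]
          have := congrFun hc i
          simp only [Pi.add_apply, mulVec_add, mulVec_mulVec, neg_mulVec,
            Pi.neg_apply] at this ⊢
          linarith
      | inr i =>
          have := congrFun hAu i
          simp [mulVec_mulVec, this]
    · rw [fromCols_mulVec_sumElim]
      ext i
      have := congrFun hx i
      simp only [Pi.add_apply, Pi.sub_apply, mulVec_add, mulVec_mulVec,
        neg_mulVec, Pi.neg_apply, Pi.zero_apply] at this ⊢
      linarith
  · intro h hmem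
    obtain ⟨δ, ξ', hξ', hc, hx⟩ := hmem
    set ξ : ng → ℝ := ξ' ∘ Sum.inl with hξdef
    set ξu : gu → ℝ := ξ' ∘ Sum.inr with hξudef
    have hsum : Sum.elim ξ ξu = ξ' := Sum.elim_comp_inl_inr ξ'
    rw [← hsum] at hc hx
    rw [fromRows_mulVec, fromRows_mulVec, fromCols_mulVec_sumElim,
      fromCols_mulVec_sumElim] at hc
    rw [fromCols_mulVec_sumElim] at hx
    have hc1 := fun i => congrFun hc (Sum.inl i)
    have hc2 := fun i => congrFun hc (Sum.inr i)
    have hAu : Au *ᵥ ξu = bu := by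
      ext i
      have := hc2 i
      simpa using this
    refine h (cu + Gu *ᵥ ξu) ⟨ξu, fun i => hξ' (Sum.inr i), hAu, rfl⟩ ?_
    refine ⟨δ, ξ, fun i => hξ' (Sum.inl i), ?_, ?_⟩
    · ext i
      have := hc1 i
      simp only [Pi.add_apply, Sum.elim_inl, mulVec_add, mulVec_mulVec,
        neg_mulVec, Pi.neg_apply] at this ⊢
      linarith
    · ext i
      have := congrFun hx i
      simp only [Pi.add_apply, Pi.sub_apply, mulVec_add, mulVec_mulVec,
        neg_mulVec, Pi.neg_apply, Pi.zero_apply] at this ⊢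
      linarith
end

section
/- Explicit line-zonotope representation of the common domain of p linear mappings: For i = 1, …, p let Z_i = LZ(M_i, G_i, c_i, S_i, A_i, b_i) ⊆ ℝ^{n_i} be line zonotopes and R_i ∈ ℝ^{n_i×n}. Define the stacked matrices R̃ = [R_1; …; R_p], M̃ = blkdiag(M_1, …, M_p), G̃ = blkdiag(G_1, …, G_p), S̃ = blkdiag(S_1, …, S_p), Ã = blkdiag(A_1, …, A_p), c̃ = [c_1; …; c_p], b̃ = [b_1; …; b_p], and let ñ_δ and ñ_g be the total numbers of lines and generators. Then {x ∈ ℝ^n : R_i x ∈ Z_i for all i = 1, …, p} equals the line zonotope with lines [I_n 0_{n×ñ_δ}], generators 0_{n×ñ_g}, center 0_n, and constraints S = [(0, S̃); (R̃, −M̃)], A = [Ã; −G̃], b = [b̃; c̃]. -/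
open Matrix

open Matrix in
lemma bd_mulVec {p : ℕ} {ci di : Fin p → Type*} [∀ i, Fintype (di i)]
    (T : ∀ i, Matrix (ci i) (di i) ℝ) (v : (Σ i, di i) → ℝ) (r : Σ i, ci i) :
    (Matrix.blockDiagonal' T *ᵥ v) r = (T r.1 *ᵥ fun j => v ⟨r.1, j⟩) r.2 := by
  simp [mulVec, dotProduct, blockDiagonal'_apply]
  rw [← Finset.univ_sigma_univ]
  obtain ⟨i, k⟩ := r
  rw [Finset.sum_sigma]
  rw [Finset.sum_eq_single i]
  · simp
  · intro j _ hj; simp [Ne.symm hj]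
  · simp

/-- Explicit line-zonotope representation of the common domain of `p` linear mappings:
`{x : R_i x ∈ Z_i ∀ i}` equals the line zonotope with lines `[I_n 0]`, zero generators,
zero center, and constraints `S = [(0, S̃); (R̃, −M̃)]`, `A = [Ã; −G̃]`, `b = [b̃; c̃]`. -/
theorem lz_common_domain {n p : ℕ} {ni di gi ci : Fin p → Type*}
    [∀ i, Fintype (ni i)] [∀ i, Fintype (di i)] [∀ i, Fintype (gi i)]
    (M : ∀ i, Matrix (ni i) (di i) ℝ) (G : ∀ i, Matrix (ni i) (gi i) ℝ)
    (c : ∀ i, ni i → ℝ)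
    (S : ∀ i, Matrix (ci i) (di i) ℝ) (A : ∀ i, Matrix (ci i) (gi i) ℝ)
    (b : ∀ i, ci i → ℝ)
    (R : ∀ i, Matrix (ni i) (Fin n) ℝ) :
    {x : Fin n → ℝ | ∀ i, (R i) *ᵥ x ∈ LZ (M i) (G i) (c i) (S i) (A i) (b i)} =
      LZ (fromCols (1 : Matrix (Fin n) (Fin n) ℝ) (0 : Matrix (Fin n) (Σ i, di i) ℝ))
         (0 : Matrix (Fin n) (Σ i, gi i) ℝ)
         (0 : Fin n → ℝ)
         (fromRows
           (fromCols (0 : Matrix (Σ i, ci i) (Fin n) ℝ) (blockDiagonal' S))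
           (fromCols (Matrix.of fun (r : Σ i, ni i) j => R r.1 r.2 j)
                        (-(blockDiagonal' M))))
         (fromRows (blockDiagonal' A) (-(blockDiagonal' G)))
         (Sum.elim (fun r : Σ i, ci i => b r.1 r.2) (fun r : Σ i, ni i => c r.1 r.2)) := by
  ext x
  simp only [Set.mem_setOf_eq, LZ]
  constructor
  · intro h
    choose δ ξ hξ heq hx using h
    refine ⟨Sum.elim x (fun r => δ r.1 r.2), fun r => ξ r.1 r.2, fun r => hξ r.1 r.2, ?_, ?_⟩
    · funext r
      cases r with
      | inl r =>
        simp only [fromRows_mulVec, Pi.add_apply, Sum.elim_inl, fromCols_mulVec_sumElim,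
          zero_mulVec, zero_add, bd_mulVec]
        have := congrFun (heq r.1) r.2
        simpa using this
      | inr r =>
        simp only [fromRows_mulVec, Pi.add_apply, Sum.elim_inr, fromCols_mulVec_sumElim,
          neg_mulVec, Pi.neg_apply, bd_mulVec]
        have := congrFun (hx r.1) r.2
        have hR : ((Matrix.of fun (r : Σ i, ni i) j => R r.1 r.2 j) *ᵥ x) r = (R r.1 *ᵥ x) r.2 := rfl
        simp only [Pi.add_apply] at this
        rw [hR, this]
        ring
    · simp [fromCols_mulVec_sumElim]
  · rintro ⟨δ, ξ, hξ, heq, hx⟩ i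
    have hδ : δ = Sum.elim (δ ∘ Sum.inl) (δ ∘ Sum.inr) := by
      funext r; cases r <;> rfl
    rw [hδ] at heq hx
    simp only [fromCols_mulVec_sumElim, zero_mulVec, add_zero, one_mulVec,
      zero_mulVec, Pi.zero_apply, zero_add] at hx
    have hx' : x = δ ∘ Sum.inl := by simpa using hx
    refine ⟨fun j => δ (Sum.inr ⟨i, j⟩), fun j => ξ ⟨i, j⟩, fun j => hξ ⟨i, j⟩, ?_, ?_⟩
    · funext k
      have := congrFun heq (Sum.inl ⟨i, k⟩)
      simp only [fromRows_mulVec, Pi.add_apply, Sum.elim_inl, fromCols_mulVec_sumElim,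
        zero_mulVec, zero_add, bd_mulVec] at this
      simpa using this
    · funext k
      have := congrFun heq (Sum.inr ⟨i, k⟩)
      simp only [fromRows_mulVec, Pi.add_apply, Sum.elim_inr, fromCols_mulVec_sumElim,
        neg_mulVec, Pi.neg_apply, bd_mulVec, Pi.add_apply] at this
      have hR : ((Matrix.of fun (r : Σ i, ni i) j => R r.1 r.2 j) *ᵥ (δ ∘ Sum.inl)) ⟨i, k⟩
          = (R i *ᵥ (δ ∘ Sum.inl)) k := rfl
      rw [hR] at this
      simp only [Function.comp] at this
      rw [hx']
      simp only [Pi.add_apply]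
      linarith [this]
end

section
/- Separation condition for constrained zonotopes with affine input dependence (Theorem 2, abstract form): For i = 1, 2 let Y_i(u) = CZ(G_i, c_i + P_i u, A_i, b_i + Q_i u) ⊆ ℝ^p be constrained zonotopes whose centers and constraint vectors depend affinely on u ∈ ℝ^m, with P_i ∈ ℝ^{p×m} and Q_i ∈ ℝ^{n_{c_i}×m}. Then Y_1(u) ∩ Y_2(u) = ∅ if and only if the stacked vector [(P_2 − P_1)u; Q_1 u; Q_2 u] does NOT belong to the zonotope with generator matrix [(G_1, −G_2); (A_1, 0); (0, A_2)] and center [c_1 − c_2; −b_1; −b_2]. -/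
open Matrix

/-- The constrained zonotope `CZ(G,c,A,b) = {c + Gξ : ‖ξ‖_∞ ≤ 1, Aξ = b}`. -/
def CZ {n ng nc : Type*} [Fintype ng]
    (G : Matrix n ng ℝ) (c : n → ℝ) (A : Matrix nc ng ℝ) (b : nc → ℝ) : Set (n → ℝ) :=
  {x | ∃ ξ : ng → ℝ, (∀ i, |ξ i| ≤ 1) ∧ A *ᵥ ξ = b ∧ x = c + G *ᵥ ξ}

/-- Separation condition for constrained zonotopes with affine input dependence
(Theorem 2, abstract form): `Y_1(u) ∩ Y_2(u) = ∅` iff `[(P_2 − P_1)u; Q_1 u; Q_2 u]`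
does not belong to the zonotope with generator matrix `[(G_1,−G_2);(A_1,0);(0,A_2)]`
and center `[c_1 − c_2; −b_1; −b_2]`. -/
theorem cz_separation_iff {p m g1 nc1 g2 nc2 : Type*}
    [Fintype m] [Fintype g1] [Fintype g2]
    (G1 : Matrix p g1 ℝ) (c1 : p → ℝ) (A1 : Matrix nc1 g1 ℝ) (b1 : nc1 → ℝ)
    (P1 : Matrix p m ℝ) (Q1 : Matrix nc1 m ℝ)
    (G2 : Matrix p g2 ℝ) (c2 : p → ℝ) (A2 : Matrix nc2 g2 ℝ) (b2 : nc2 → ℝ)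
    (P2 : Matrix p m ℝ) (Q2 : Matrix nc2 m ℝ)
    (u : m → ℝ) :
    CZ G1 (c1 + P1 *ᵥ u) A1 (b1 + Q1 *ᵥ u)
        ∩ CZ G2 (c2 + P2 *ᵥ u) A2 (b2 + Q2 *ᵥ u) = ∅ ↔
      Sum.elim ((P2 - P1) *ᵥ u) (Sum.elim (Q1 *ᵥ u) (Q2 *ᵥ u)) ∉
        CZ (fromRows (fromCols G1 (-G2)) (fromBlocks A1 0 0 A2))
           (Sum.elim (c1 - c2) (Sum.elim (-b1) (-b2)))
           (0 : Matrix (Fin 0) (g1 ⊕ g2) ℝ) (0 : Fin 0 → ℝ) := by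
  rw [← Set.not_nonempty_iff_eq_empty, not_iff_not, Set.inter_nonempty]
  constructor
  · rintro ⟨x, ⟨ξ1, h1, hA1, hx1⟩, ⟨ξ2, h2, hA2, hx2⟩⟩
    refine ⟨Sum.elim ξ1 ξ2, ?_, ?_, ?_⟩
    · rintro (i | i)
      · exact h1 i
      · exact h2 i
    · ext i; exact i.elim0
    · have hG : G1 *ᵥ ξ1 - G2 *ᵥ ξ2 = (P2 - P1) *ᵥ u - (c1 - c2) := by
        have := hx1.symm.trans hx2
        rw [sub_mulVec]
        funext i
        have := congrFun this i
        simp only [Pi.add_apply, Pi.sub_apply] at this ⊢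
        linarith
      rw [fromRows_mulVec, ← Sum.elim_comp_inl_inr (Sum.elim ξ1 ξ2),
        fromCols_mulVec_sumElim]
      simp only [Sum.elim_comp_inl, Sum.elim_comp_inr, fromBlocks_mulVec,
        zero_mulVec, add_zero, zero_add, hA1, hA2, neg_mulVec]
      funext i
      rcases i with i | i | i
      · have h := congrFun hG i
        simp only [Pi.sub_apply, sub_mulVec] at h
        simp only [Sum.elim_inl, Pi.add_apply, Pi.sub_apply, Pi.neg_apply, sub_mulVec]
        linarith
      · simp
      · simp
  · rintro ⟨ξ, hb, -, hx⟩
    rw [fromRows_mulVec, ← Sum.elim_comp_inl_inr ξ, fromCols_mulVec_sumElim,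
      Sum.elim_comp_inl_inr, fromBlocks_mulVec, ← Sum.elim_comp_inl_inr ξ] at hx
    simp only [Sum.elim_comp_inl, Sum.elim_comp_inr, zero_mulVec, add_zero, zero_add,
      neg_mulVec] at hx
    have htop : ∀ i, ((P2 - P1) *ᵥ u) i = (c1 - c2) i + (G1 *ᵥ (ξ ∘ Sum.inl)) i - (G2 *ᵥ (ξ ∘ Sum.inr)) i := by
      intro i
      have := congrFun hx (Sum.inl i)
      simp only [Sum.elim_inl, Pi.add_apply, Pi.sub_apply, Pi.neg_apply, sub_mulVec] at this ⊢
      linarith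
    have h1 : A1 *ᵥ (ξ ∘ Sum.inl) = b1 + Q1 *ᵥ u := by
      funext i
      have := congrFun hx (Sum.inr (Sum.inl i))
      simp only [Sum.elim_inl, Sum.elim_inr, Pi.add_apply, Pi.neg_apply] at this
      simp only [Pi.add_apply]; linarith
    have h2 : A2 *ᵥ (ξ ∘ Sum.inr) = b2 + Q2 *ᵥ u := by
      funext i
      have := congrFun hx (Sum.inr (Sum.inr i))
      simp only [Sum.elim_inl, Sum.elim_inr, Pi.add_apply, Pi.neg_apply] at this
      simp only [Pi.add_apply]; linarith
    refine ⟨c1 + P1 *ᵥ u + G1 *ᵥ (ξ ∘ Sum.inl),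
      ⟨ξ ∘ Sum.inl, fun i => hb _, h1, rfl⟩,
      ⟨ξ ∘ Sum.inr, fun i => hb _, h2, ?_⟩⟩
    funext i
    have := htop i
    simp only [sub_mulVec, Pi.sub_apply, Pi.add_apply] at this ⊢
    linarith
end

section
/- Explicit representation of the initial feasible set of a descriptor system: Let Z = LZ(M_0, G_0, c_0, S_0, A_0, b_0) ⊆ ℝ^n and W = LZ(M_w, G_w, c_w, S_w, A_w, b_w) ⊆ ℝ^{n_w} be line zonotopes, Ǎ ∈ ℝ^{s×n}, B̌_w ∈ ℝ^{s×n_w}, B̌ ∈ ℝ^{s×n_u}, and u ∈ ℝ^{n_u}. Then { z ∈ Z : ∃ w ∈ W, Ǎ z + B̌ u + B̌_w w = 0 } equals the line zonotope with lines [M_0 0], generators [G_0 0], center c_0, and constraints S = [blkdiag(S_0, S_w); (Ǎ M_0, B̌_w M_w)], A = [blkdiag(A_0, A_w); (Ǎ G_0, B̌_w G_w)], b = [b_0; b_w; −Ǎ c_0 − B̌_w c_w − B̌ u]. -/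
open Matrix

/-- Explicit representation of the initial feasible set of a descriptor system:
`{z ∈ Z : ∃ w ∈ W, Ǎz + B̌u + B̌_w w = 0}` is the line zonotope with lines `[M_0 0]`,
generators `[G_0 0]`, center `c_0`, and constraints
`S = [blkdiag(S_0,S_w); (Ǎ M_0, B̌_w M_w)]`, `A = [blkdiag(A_0,A_w); (Ǎ G_0, B̌_w G_w)]`,
`b = [b_0; b_w; −Ǎ c_0 − B̌_w c_w − B̌ u]`. -/
theorem lz_initial_feasible_set {n w nu s d0 g0 nc0 dw gw ncw : Type*}
    [Fintype n] [Fintype w] [Fintype nu]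
    [Fintype d0] [Fintype g0] [Fintype dw] [Fintype gw]
    (M0 : Matrix n d0 ℝ) (G0 : Matrix n g0 ℝ) (c0 : n → ℝ)
    (S0 : Matrix nc0 d0 ℝ) (A0 : Matrix nc0 g0 ℝ) (b0 : nc0 → ℝ)
    (Mw : Matrix w dw ℝ) (Gw : Matrix w gw ℝ) (cw : w → ℝ)
    (Sw : Matrix ncw dw ℝ) (Aw : Matrix ncw gw ℝ) (bw : ncw → ℝ)
    (cA : Matrix s n ℝ) (cBw : Matrix s w ℝ) (cB : Matrix s nu ℝ) (u : nu → ℝ) :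
    {z ∈ LZ M0 G0 c0 S0 A0 b0 | ∃ wv ∈ LZ Mw Gw cw Sw Aw bw,
        cA *ᵥ z + cB *ᵥ u + cBw *ᵥ wv = 0} =
      LZ (fromCols M0 (0 : Matrix n dw ℝ)) (fromCols G0 (0 : Matrix n gw ℝ)) c0
        (fromRows (fromBlocks S0 0 0 Sw) (fromCols (cA * M0) (cBw * Mw)))
        (fromRows (fromBlocks A0 0 0 Aw) (fromCols (cA * G0) (cBw * Gw)))
        (Sum.elim (Sum.elim b0 bw) (-(cA *ᵥ c0) - cBw *ᵥ cw - cB *ᵥ u)) := by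
  ext z
  simp only [Set.mem_setOf_eq, Set.mem_sep_iff, LZ]
  constructor
  · rintro ⟨⟨δ0, ξ0, hξ0, hc0, rfl⟩, wv, ⟨δw, ξw, hξw, hcw, rfl⟩, heq⟩
    refine ⟨Sum.elim δ0 δw, Sum.elim ξ0 ξw, ?_, ?_, ?_⟩
    · intro i; cases i <;> simp [hξ0 _, hξw _]
    · rw [fromRows_mulVec, fromRows_mulVec, fromBlocks_mulVec, fromBlocks_mulVec,
        fromCols_mulVec_sumElim, fromCols_mulVec_sumElim]
      funext i
      cases i with
      | inl j =>
        rcases j with k | k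
        · simpa using congrFun hc0 k
        · simpa using congrFun hcw k
      | inr j =>
        simp only [Pi.add_apply, Sum.elim_inr, Pi.sub_apply, Pi.neg_apply]
        have := congrFun heq j
        simp only [Pi.add_apply, Pi.zero_apply, mulVec_mulVec] at this ⊢
        rw [← Matrix.mulVec_mulVec, ← Matrix.mulVec_mulVec, ← Matrix.mulVec_mulVec,
          ← Matrix.mulVec_mulVec]
        have h1 : cA *ᵥ (c0 + M0 *ᵥ δ0 + G0 *ᵥ ξ0) = cA *ᵥ c0 + cA *ᵥ (M0 *ᵥ δ0) + cA *ᵥ (G0 *ᵥ ξ0) := by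
          rw [mulVec_add, mulVec_add]
        have h2 : cBw *ᵥ (cw + Mw *ᵥ δw + Gw *ᵥ ξw) = cBw *ᵥ cw + cBw *ᵥ (Mw *ᵥ δw) + cBw *ᵥ (Gw *ᵥ ξw) := by
          rw [mulVec_add, mulVec_add]
        rw [h1, h2] at this
        simp only [Pi.add_apply] at this
        linarith
    · rw [fromCols_mulVec_sumElim, fromCols_mulVec_sumElim]
      simp
  · rintro ⟨δ, ξ, hξ, hc, rfl⟩
    rw [← Sum.elim_comp_inl_inr δ, ← Sum.elim_comp_inl_inr ξ] at hc ⊢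
    rw [fromRows_mulVec, fromRows_mulVec, fromBlocks_mulVec, fromBlocks_mulVec,
      fromCols_mulVec_sumElim, fromCols_mulVec_sumElim] at hc
    rw [fromCols_mulVec_sumElim, fromCols_mulVec_sumElim]
    have hc1 := congrFun hc
    have hb0 : S0 *ᵥ (δ ∘ Sum.inl) + A0 *ᵥ (ξ ∘ Sum.inl) = b0 := by
      funext j; have := hc1 (Sum.inl (Sum.inl j)); simpa using this
    have hbw : Sw *ᵥ (δ ∘ Sum.inr) + Aw *ᵥ (ξ ∘ Sum.inr) = bw := by
      funext j; have := hc1 (Sum.inl (Sum.inr j)); simpa using this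
    refine ⟨⟨δ ∘ Sum.inl, ξ ∘ Sum.inl, fun i => hξ _, hb0, by simp⟩,
      cw + Mw *ᵥ (δ ∘ Sum.inr) + Gw *ᵥ (ξ ∘ Sum.inr),
      ⟨δ ∘ Sum.inr, ξ ∘ Sum.inr, fun i => hξ _, hbw, rfl⟩, ?_⟩
    funext j
    have := hc1 (Sum.inr j)
    simp only [Pi.add_apply, Sum.elim_inr, Pi.sub_apply, Pi.neg_apply, mulVec_mulVec] at this
    rw [← Matrix.mulVec_mulVec, ← Matrix.mulVec_mulVec, ← Matrix.mulVec_mulVec,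
      ← Matrix.mulVec_mulVec] at this
    simp only [Pi.add_apply, Pi.zero_apply, mulVec_add, mulVec_zero, zero_mulVec,
      add_zero]
    linarith [this]
end
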